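/- Every polynomial in one variable with natural number coefficients can be represented in RSLR as a term of type □U → U operating on unary-encoded natural numbers: for the term p̄ encoding polynomial p, and every i ∈ ℕ, the application of p̄ to the unary encoding of i evaluates with probability 1 to the unary encoding of p(i). -/

import Mathlib

/-- Aspects of RSLR: modal □ (`box`) and non-modal ■ (`bbox`). -/
inductive Aspect | box | bbox
deriving DecidableEq, Repr

/-- Ordering on aspects: □ <: □, □ <: ■, ■ <: ■. -/
inductive AspectSub : Aspect → Aspect → Prop
  | refl (a : Aspect) : AspectSub a a
  | boxLe : AspectSub .box .bbox

/-- RSLR types: A ::= N | aA → A. -/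
inductive Ty
  | N
  | arr (a : Aspect) (A B : Ty)
deriving DecidableEq, Repr

/-- Subtyping on RSLR types. -/
inductive TySub : Ty → Ty → Prop
  | refl (A : Ty) : TySub A A
  | trans {A B C} : TySub A B → TySub B C → TySub A C
  | arr {A B C D : Ty} {a b : Aspect} :
      TySub B A → TySub C D → AspectSub b a → TySub (.arr a A C) (.arr b B D)

mutual
  /-- Positively □-free types. -/
  def posFree : Ty → Prop
    | .N => True
    | .arr .box _ _ => False
    | .arr .bbox A B => negFree A ∧ posFree B
  /-- Negatively □-free types. -/
  def negFree : Ty → Prop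
    | .N => True
    | .arr _ A B => posFree A ∧ negFree B
end

/-- A type is □-free when the modal aspect □ occurs nowhere in it. -/
def tyBoxFree : Ty → Prop
  | .N => True
  | .arr a A B => a = .bbox ∧ tyBoxFree A ∧ tyBoxFree B

/-- Terms of RSLR (with named variables). -/
inductive Term
  | var (x : ℕ)
  | num (n : ℕ)
  | s0 | s1 | pred | rand
  | app (t s : Term)
  | lam (x : ℕ) (a : Aspect) (A : Ty) (t : Term)
  | case_ (A : Ty) (t s r q : Term)
  | rec_ (A : Ty) (t s r : Term)
deriving DecidableEq, Repr

/-- Substitution of `u` for the variable `x` in `t`. -/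
def subst (t : Term) (x : ℕ) (u : Term) : Term :=
  match t with
  | .var y => if y = x then u else .var y
  | .num n => .num n
  | .s0 => .s0
  | .s1 => .s1
  | .pred => .pred
  | .rand => .rand
  | .app a b => .app (subst a x u) (subst b x u)
  | .lam y a A b => if y = x then .lam y a A b else .lam y a A (subst b x u)
  | .case_ A a b c d => .case_ A (subst a x u) (subst b x u) (subst c x u) (subst d x u)
  | .rec_ A a b c => .rec_ A (subst a x u) (subst b x u) (subst c x u)

/-- Free variables of a term. -/
def fv : Term → List ℕ
  | .var x => [x]
  | .app a b => fv a ++ fv b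
  | .lam x _ _ b => (fv b).filter (· ≠ x)
  | .case_ _ a b c d => fv a ++ fv b ++ fv c ++ fv d
  | .rec_ _ a b c => fv a ++ fv b ++ fv c
  | _ => []

def Closed (t : Term) : Prop := fv t = []

/-- Explicit terms contain no recursion. -/
def Explicit : Term → Prop
  | .rec_ _ _ _ _ => False
  | .app a b => Explicit a ∧ Explicit b
  | .lam _ _ _ b => Explicit b
  | .case_ _ a b c d => Explicit a ∧ Explicit b ∧ Explicit c ∧ Explicit d
  | _ => True

/-- Contexts: finite lists of (variable, aspect, type) assignments. -/
abbrev Ctx := List (ℕ × Aspect × Ty)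

/-- All assignments in the context are of base type N. -/
def baseCtx (Γ : Ctx) : Prop := ∀ e ∈ Γ, e.2.2 = Ty.N

/-- Every aspect in the context is below `a` (Γ <: a). -/
def ctxLe (Γ : Ctx) (a : Aspect) : Prop := ∀ e ∈ Γ, AspectSub e.2.1 a

/-- The type ■N → N of the constants S₀, S₁, P. -/
def nmArrNN : Ty := .arr .bbox .N .N

/-- RSLR typing. A judgment `Γ; Δ ⊢ t : A` of the paper (with Γ base-typed)
is rendered as `HasType (Γ ++ Δ) t A` together with `baseCtx Γ` side conditions
where splitting matters. -/
inductive HasType : Ctx → Term → Ty → Prop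
  | var {Γ : Ctx} {x a A} : (x, a, A) ∈ Γ → HasType Γ (.var x) A
  | num {Γ n} : HasType Γ (.num n) .N
  | s0 {Γ} : HasType Γ .s0 nmArrNN
  | s1 {Γ} : HasType Γ .s1 nmArrNN
  | pred {Γ} : HasType Γ .pred nmArrNN
  | rand {Γ} : HasType Γ .rand .N
  | sub {Γ t A B} : HasType Γ t A → TySub A B → HasType Γ t B
  | lam {Γ x a A B t} : HasType ((x, a, A) :: Γ) t B →
      HasType Γ (.lam x a A t) (.arr a A B)
  | case_ {Γ Δ₁ Δ₂ Δ₃ Δ₄ : Ctx} {t s r q A} :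
      baseCtx Γ →
      HasType (Γ ++ Δ₁) t .N →
      HasType (Γ ++ Δ₂) s A →
      HasType (Γ ++ Δ₃) r A →
      HasType (Γ ++ Δ₄) q A →
      tyBoxFree A →
      HasType (Γ ++ Δ₁ ++ Δ₂ ++ Δ₃ ++ Δ₄) (.case_ A t s r q) A
  | rec_ {Γ₁ Γ₂ Δ₁ Δ₂ : Ctx} {t s r A} :
      baseCtx Γ₁ → baseCtx Γ₂ →
      HasType (Γ₁ ++ Δ₁) t .N →
      HasType (Γ₁ ++ Γ₂ ++ Δ₂) s A →
      HasType (Γ₁ ++ Γ₂) r (.arr .box .N (.arr .bbox A A)) →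
      ctxLe (Γ₁ ++ Δ₁) .box →
      tyBoxFree A →
      HasType (Γ₁ ++ Γ₂ ++ Δ₁ ++ Δ₂) (.rec_ A t s r) A
  | app {Γ Δ₁ Δ₂ : Ctx} {t s a A B} :
      baseCtx Γ →
      HasType (Γ ++ Δ₁) t (.arr a A B) →
      HasType (Γ ++ Δ₂) s A →
      ctxLe (Γ ++ Δ₂) a →
      HasType (Γ ++ Δ₁ ++ Δ₂) (.app t s) B

/-- Probabilistic one-step reduction: a term reduces to a sequence of terms,
each with equal probability. -/
inductive Step : Term → List Term → Prop
  | caseZero {A z e o} : Step (.case_ A (.num 0) z e o) [z]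
  | caseEven {A n z e o} : Step (.case_ A (.num (2 * (n + 1))) z e o) [e]
  | caseOdd {A n z e o} : Step (.case_ A (.num (2 * n + 1)) z e o) [o]
  | recZero {A g f} : Step (.rec_ A (.num 0) g f) [g]
  | recSucc {A n g f} : Step (.rec_ A (.num (n + 1)) g f)
      [.app (.app f (.num (n + 1))) (.rec_ A (.num ((n + 1) / 2)) g f)]
  | succ0 {n} : Step (.app .s0 (.num n)) [.num (2 * n)]
  | succ1 {n} : Step (.app .s1 (.num n)) [.num (2 * n + 1)]
  | predStep {n} : Step (.app .pred (.num n)) [.num (n / 2)]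
  | betaN {x a t n} : Step (.app (.lam x a .N t) (.num n)) [subst t x (.num n)]
  | betaH {x a b A B t s} : Step (.app (.lam x a (.arr b A B) t) s) [subst t x s]
  | swap {x a A t s r} :
      Step (.app (.app (.lam x a A t) s) r) [.app (.lam x a A (.app t r)) s]
  | randStep : Step .rand [.num 0, .num 1]
  | appL {t s l} : Step t l → Step (.app t s) (l.map fun t' => .app t' s)
  | appR {t s l} : Step s l → Step (.app t s) (l.map fun s' => .app t s')
  | lamC {x a A t l} : Step t l → Step (.lam x a A t) (l.map fun t' => .lam x a A t')
  | caseT {A t s r q l} : Step t l →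
      Step (.case_ A t s r q) (l.map fun t' => .case_ A t' s r q)
  | caseS {A t s r q l} : Step s l →
      Step (.case_ A t s r q) (l.map fun s' => .case_ A t s' r q)
  | caseR {A t s r q l} : Step r l →
      Step (.case_ A t s r q) (l.map fun r' => .case_ A t s r' q)
  | caseQ {A t s r q l} : Step q l →
      Step (.case_ A t s r q) (l.map fun q' => .case_ A t s r q')
  | recT {A t s r l} : Step t l →
      Step (.rec_ A t s r) (l.map fun t' => .rec_ A t' s r)

def NormalForm (t : Term) : Prop := ∀ l, ¬ Step t l

/-- The Dirac distribution on a term. -/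
noncomputable def dirac (t : Term) : Term → ℝ := fun s => if s = t then 1 else 0

/-- Multistep reduction to a distribution over normal forms. -/
inductive MStep : Term → (Term → ℝ) → Prop
  | nf {t} : NormalForm t → MStep t (dirac t)
  | step {t : Term} {ts : List Term} {Ds : List (Term → ℝ)} :
      Step t ts → ts.length = Ds.length →
      (∀ p ∈ ts.zip Ds, MStep p.1 p.2) →
      MStep t (fun s => ((Ds.map fun D => D s).sum) / (ts.length : ℝ))

/-- The relaxed multistep reduction relation ⇒, indexed by derivation size. -/
inductive MStepR : ℕ → Term → (Term → ℝ) → Prop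
  | ax (t : Term) : MStepR 0 t (dirac t)
  | step {t : Term} {ts : List Term} {Ds : List (Term → ℝ)} {ks : List ℕ} :
      Step t ts → ts.length = Ds.length → Ds.length = ks.length →
      (∀ p ∈ ts.zip (Ds.zip ks), MStepR p.2.2 p.1 p.2.1) →
      MStepR (ks.foldr max 0 + 1) t (fun s => ((Ds.map fun D => D s).sum) / (ts.length : ℝ))

/-- Size of a numeral: ⌈log₂ n⌉, taken to be at least 1. -/
def numSize (n : ℕ) : ℕ := max (Nat.clog 2 n) 1

/-- Size of a term, numerals having logarithmic size. -/
def tsize : Term → ℕ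
  | .var _ => 1
  | .num n => numSize n
  | .s0 => 1 | .s1 => 1 | .pred => 1 | .rand => 1
  | .app a b => tsize a + tsize b
  | .lam _ _ _ b => tsize b + 1
  | .case_ _ a b c d => tsize a + tsize b + tsize c + tsize d + 1
  | .rec_ _ a b c => tsize a + tsize b + tsize c + 1

/-- Size of a term counting every numeral as 1. -/
def wsize : Term → ℕ
  | .var _ => 1
  | .num _ => 1
  | .s0 => 1 | .s1 => 1 | .pred => 1 | .rand => 1
  | .app a b => wsize a + wsize b
  | .lam _ _ _ b => wsize b + 1
  | .case_ _ a b c d => wsize a + wsize b + wsize c + wsize d + 1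
  | .rec_ _ a b c => wsize a + wsize b + wsize c + 1

/-- Maximum size of a numeral occurring in a term (0 if none). -/
def nsize : Term → ℕ
  | .num n => numSize n
  | .app a b => max (nsize a) (nsize b)
  | .lam _ _ _ b => nsize b
  | .case_ _ a b c d => max (max (nsize a) (nsize b)) (max (nsize c) (nsize d))
  | .rec_ _ a b c => max (nsize a) (max (nsize b) (nsize c))
  | _ => 0

/-- Iterated application `t u₁ … u_k`. -/
def appL (t : Term) (us : List Term) : Term := us.foldl Term.app t

def IsConst : Term → Prop := fun c =>
  (∃ n, c = .num n) ∨ c = .s0 ∨ c = .s1 ∨ c = .pred ∨ c = .rand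

/-- Big-step normal-form evaluation ⇓_nf for explicit closed terms of type N,
indexed by probability, result numeral, derivation size, and the list of terms
occurring in the derivation. -/
inductive Nf : Term → ℝ → ℕ → ℕ → List Term → Prop
  | num {n} : Nf (.num n) 1 n 1 [.num n]
  | rand0 : Nf .rand (1/2) 0 1 [.rand]
  | rand1 : Nf .rand (1/2) 1 1 [.rand]
  | succ0 {t α n k l} : Nf t α n k l →
      Nf (.app .s0 t) α (2 * n) (k + 1) (.app .s0 t :: l)
  | succ1 {t α n k l} : Nf t α n k l →
      Nf (.app .s1 t) α (2 * n + 1) (k + 1) (.app .s1 t :: l)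
  | pred0 {t α k l} : Nf t α 0 k l →
      Nf (.app .pred t) α 0 (k + 1) (.app .pred t :: l)
  | predS {t α n k l} : Nf t α n k l → 1 ≤ n →
      Nf (.app .pred t) α (n / 2) (k + 1) (.app .pred t :: l)
  | caseZ {A t s r q us α β m k₁ k₂ l₁ l₂} :
      Nf t α 0 k₁ l₁ → Nf (appL s us) β m k₂ l₂ →
      Nf (appL (.case_ A t s r q) us) (α * β) m (k₁ + k₂ + 1)
        (appL (.case_ A t s r q) us :: l₁ ++ l₂)
  | caseE {A t s r q us α β n m k₁ k₂ l₁ l₂} :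
      Nf t α (2 * n) k₁ l₁ → 1 ≤ n → Nf (appL r us) β m k₂ l₂ →
      Nf (appL (.case_ A t s r q) us) (α * β) m (k₁ + k₂ + 1)
        (appL (.case_ A t s r q) us :: l₁ ++ l₂)
  | caseO {A t s r q us α β n m k₁ k₂ l₁ l₂} :
      Nf t α (2 * n + 1) k₁ l₁ → Nf (appL q us) β m k₂ l₂ →
      Nf (appL (.case_ A t s r q) us) (α * β) m (k₁ + k₂ + 1)
        (appL (.case_ A t s r q) us :: l₁ ++ l₂)
  | betaN {x a t s rs α β n m k₁ k₂ l₁ l₂} :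
      Nf s α n k₁ l₁ → Nf (appL (subst t x (.num n)) rs) β m k₂ l₂ →
      Nf (appL (.app (.lam x a .N t) s) rs) (α * β) m (k₁ + k₂ + 1)
        (appL (.app (.lam x a .N t) s) rs :: l₁ ++ l₂)
  | betaH {x a b A B t s rs β n k l} :
      Nf (appL (subst t x s) rs) β n k l →
      Nf (appL (.app (.lam x a (.arr b A B) t) s) rs) β n (k + 1)
        (appL (.app (.lam x a (.arr b A B) t) s) rs :: l)

/-- Recursion-elimination evaluation ⇓_rf, indexed by probability, result term,
derivation size, and the terms occurring in the derivation. -/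
inductive Rf : Term → ℝ → Term → ℕ → List Term → Prop
  | const {c} : IsConst c → Rf c 1 c 1 [c]
  | succ0 {t α v k l} : Rf t α v k l →
      Rf (.app .s0 t) α (.app .s0 v) (k + 1) (.app .s0 t :: l)
  | succ1 {t α v k l} : Rf t α v k l →
      Rf (.app .s1 t) α (.app .s1 v) (k + 1) (.app .s1 t :: l)
  | predC {t α v k l} : Rf t α v k l →
      Rf (.app .pred t) α (.app .pred v) (k + 1) (.app .pred t :: l)
  | caseC {A t s r q α β γ δ v z a b kt ks kr kq lt ls lr lq}
      {us cs : List Term} {εs : List ℝ} {kus : List ℕ} {lus : List (List Term)} :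
      Rf t α v kt lt → Rf s β z ks ls → Rf r γ a kr lr → Rf q δ b kq lq →
      us.length = εs.length → εs.length = cs.length →
      cs.length = kus.length → kus.length = lus.length →
      (∀ p ∈ us.zip (εs.zip (cs.zip (kus.zip lus))),
        Rf p.1 p.2.1 p.2.2.1 p.2.2.2.1 p.2.2.2.2) →
      Rf (appL (.case_ A t s r q) us) (α * β * γ * δ * εs.prod)
        (appL (.case_ A v z a b) cs) (kt + ks + kr + kq + kus.sum + 1)
        (appL (.case_ A t s r q) us :: lt ++ ls ++ lr ++ lq ++ lus.flatten)
  | recC {A t s r α β γ v z n kt kn ks lt ln ls}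
      {qs bs : List Term} {δs : List ℝ} {kqs : List ℕ} {lqs : List (List Term)}
      {rres : List Term} {γs : List ℝ} {krs : List ℕ} {lrs : List (List Term)} :
      Rf t α v kt lt →
      Nf v β n kn ln →
      Rf s γ z ks ls →
      qs.length = δs.length → δs.length = bs.length →
      bs.length = kqs.length → kqs.length = lqs.length →
      (∀ p ∈ qs.zip (δs.zip (bs.zip (kqs.zip lqs))),
        Rf p.1 p.2.1 p.2.2.1 p.2.2.2.1 p.2.2.2.2) →
      rres.length = Nat.size n → rres.length = γs.length →
      γs.length = krs.length → krs.length = lrs.length →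
      (∀ p ∈ (List.range (Nat.size n)).zip (γs.zip (rres.zip (krs.zip lrs))),
        Rf (.app r (.num (n / 2 ^ p.1))) p.2.1 p.2.2.1 p.2.2.2.1 p.2.2.2.2) →
      Rf (appL (.rec_ A t s r) qs) (α * β * γ * γs.prod * δs.prod)
        (appL (rres.foldr Term.app z) bs) (kt + kn + ks + kqs.sum + krs.sum + 1)
        (appL (.rec_ A t s r) qs :: lt ++ ln ++ ls ++ lqs.flatten ++ lrs.flatten)
  | betaBox {x t s rs α β γ z n u k₁ k₂ k₃ l₁ l₂ l₃} :
      Rf s α z k₁ l₁ → Nf z γ n k₂ l₂ →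
      Rf (appL (subst t x (.num n)) rs) β u k₃ l₃ →
      Rf (appL (.app (.lam x .box .N t) s) rs) (α * γ * β) u (k₁ + k₂ + k₃ + 1)
        (appL (.app (.lam x .box .N t) s) rs :: l₁ ++ l₂ ++ l₃)
  | betaBBox {x t s rs α β γ z n u k₁ k₂ k₃ l₁ l₂ l₃} :
      Rf s α z k₁ l₁ → Nf z γ n k₂ l₂ →
      Rf (appL t rs) β u k₃ l₃ →
      Rf (appL (.app (.lam x .bbox .N t) s) rs) (α * γ * β)
        (.app (.lam x .bbox .N u) (.num n)) (k₁ + k₂ + k₃ + 1)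
        (appL (.app (.lam x .bbox .N t) s) rs :: l₁ ++ l₂ ++ l₃)
  | betaH {x a b A B t s rs β u k l} :
      Rf (appL (subst t x s) rs) β u k l →
      Rf (appL (.app (.lam x a (.arr b A B) t) s) rs) β u (k + 1)
        (appL (.app (.lam x a (.arr b A B) t) s) rs :: l)
  | lamC {x a A t β u k l} :
      Rf t β u k l →
      Rf (.lam x a A t) β (.lam x a A u) (k + 1) (.lam x a A t :: l)
  | varC {x} {ts ss : List Term} {αs : List ℝ} {ks : List ℕ} {ls : List (List Term)} :
      ts.length = αs.length → αs.length = ss.length →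
      ss.length = ks.length → ks.length = ls.length →
      (∀ p ∈ ts.zip (αs.zip (ss.zip (ks.zip ls))),
        Rf p.1 p.2.1 p.2.2.1 p.2.2.2.1 p.2.2.2.2) →
      Rf (appL (.var x) ts) αs.prod (appL (.var x) ss) (ks.sum + 1)
        (appL (.var x) ts :: ls.flatten)

/-- First-order types a₁N → … → a_kN → N. -/
def FOty : ℕ → Ty → Prop
  | 0, .N => True
  | k + 1, .arr _ .N B => FOty k B
  | _, _ => False

/-- First-order terms of a given arity: closed, well-typed terms of
type a₁N → … → a_kN → N. -/
def IsFirstOrder (t : Term) (k : ℕ) : Prop :=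
  Closed t ∧ ∃ A, HasType [] t A ∧ FOty k A

/-- The unary encoding of i : the numeral whose binary representation is 1^i. -/
def unary (i : ℕ) : Term := Term.num (2 ^ i - 1)


section RSLRAux

/-- Deterministic one-step reduction. -/
def DStep (a b : Term) : Prop := Step a [b]

/-- Deterministic multistep reduction. -/
abbrev Red : Term → Term → Prop := Relation.ReflTransGen DStep

lemma nf_num (n : ℕ) : NormalForm (Term.num n) := by
  intro l h; cases h

lemma mstep_of_red {t u : Term} (h : Red t u) (hu : NormalForm u) : MStep t (dirac u) := by
  induction h using Relation.ReflTransGen.head_induction_on with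
  | refl => exact MStep.nf hu
  | @head a b hstep _ ih =>
      have h2 := MStep.step (ts := [b]) (Ds := [dirac u]) hstep rfl (by simpa using ih)
      have h3 : (fun s => ((([dirac u]).map (fun D => D s)).sum) / (([b] : List Term).length : ℝ))
          = dirac u := by
        funext s; simp
      rwa [h3] at h2

lemma red_appL {t t' : Term} (s : Term) (h : Red t t') : Red (Term.app t s) (Term.app t' s) :=
  Relation.ReflTransGen.lift (p := DStep) (fun x => Term.app x s)
    (fun a b hab => by simpa [DStep, Function.onFun] using Step.appL (s := s) (hab : Step a [b])) _ _ h

lemma red_appR {s s' : Term} (t : Term) (h : Red s s') : Red (Term.app t s) (Term.app t s') :=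
  Relation.ReflTransGen.lift (p := DStep) (fun x => Term.app t x)
    (fun a b hab => by simpa [DStep, Function.onFun] using Step.appR (t := t) (hab : Step a [b])) _ _ h

lemma red_one {t u : Term} (h : Step t [u]) : Red t u := Relation.ReflTransGen.single h

lemma subst_nfv {x : ℕ} (u : Term) : ∀ t : Term, x ∉ fv t → subst t x u = t := by
  intro t
  induction t with
  | var y =>
      intro h; simp [fv] at h
      simp [subst]; intro e; exact absurd e.symm h
  | num n => intro _; rfl
  | s0 => intro _; rfl
  | s1 => intro _; rfl
  | pred => intro _; rfl
  | rand => intro _; rfl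
  | app a b iha ihb =>
      intro h; simp [fv] at h; simp [subst, iha h.1, ihb h.2]
  | lam y a A b ih =>
      intro h
      by_cases hy : y = x
      · simp [subst, hy]
      · have hxb : x ∉ fv b := by
          intro hx
          exact h (by simp [fv, List.mem_filter, hx]; intro e; exact hy e.symm)
        simp [subst, hy, ih hxb]
  | case_ A a b c d iha ihb ihc ihd =>
      intro h; simp [fv] at h
      simp [subst, iha h.1, ihb h.2.1, ihc h.2.2.1, ihd h.2.2.2]
  | rec_ A a b c iha ihb ihc =>
      intro h; simp [fv] at h
      simp [subst, iha h.1, ihb h.2.1, ihc h.2.2]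

lemma subst_closed {t : Term} (h : Closed t) (x : ℕ) (u : Term) : subst t x u = t :=
  subst_nfv u t (by unfold Closed at h; simp [h])

end RSLRAux


section RSLRTerms

/-- λz:□N. λy:■N. S₁ y -/
def succT : Term := .lam 0 .box .N (.lam 1 .bbox .N (.app .s1 (.var 1)))

/-- addition on unary numerals: λw:□N. λx:□N. rec x w succT -/
def addT : Term := .lam 3 .box .N (.lam 0 .box .N (.rec_ .N (.var 0) (.var 3) succT))

/-- step function of multiplication, with first argument substituted -/
def stepT (m : ℕ) : Term := .lam 2 .box .N (.lam 1 .bbox .N (.rec_ .N (.num m) (.var 1) succT))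

def stepV : Term := .lam 2 .box .N (.lam 1 .bbox .N (.rec_ .N (.var 3) (.var 1) succT))

/-- multiplication on unary numerals -/
def mulT : Term := .lam 3 .box .N (.lam 0 .box .N (.rec_ .N (.var 0) (.num 0) stepV))

lemma aspectSub_bbox (a : Aspect) : AspectSub a .bbox := by
  cases a
  · exact .boxLe
  · exact .refl _

lemma aspectSub_of_box {a b : Aspect} (h : AspectSub a .box) : AspectSub a b := by
  cases h
  cases b
  · exact .refl _
  · exact .boxLe

lemma ctxLe_bbox (Γ : Ctx) : ctxLe Γ .bbox := fun _ _ => aspectSub_bbox _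

lemma ctxLe_mono {Γ : Ctx} {a : Aspect} (h : ctxLe Γ .box) : ctxLe Γ a :=
  fun e he => aspectSub_of_box (h e he)

lemma baseCtx_nil : baseCtx [] := by intro e h; cases h

lemma baseCtx_cons {x : ℕ} {a : Aspect} {Γ : Ctx} (h : baseCtx Γ) :
    baseCtx ((x, a, Ty.N) :: Γ) := by
  intro e he
  rcases List.mem_cons.1 he with h1 | h1
  · subst h1; rfl
  · exact h e h1

lemma ctxLe_cons_box {x : ℕ} {Γ : Ctx} (h : ctxLe Γ .box) :
    ctxLe ((x, Aspect.box, Ty.N) :: Γ) .box := by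
  intro e he
  rcases List.mem_cons.1 he with h1 | h1
  · subst h1; exact .refl _
  · exact h e h1

lemma hasType_app {Γ : Ctx} {t s : Term} {a : Aspect} {A B : Ty}
    (hb : baseCtx Γ) (ht : HasType Γ t (.arr a A B)) (hs : HasType Γ s A)
    (hle : ctxLe Γ a) : HasType Γ (.app t s) B := by
  have := HasType.app (Δ₁ := []) (Δ₂ := []) hb (by simpa using ht) (by simpa using hs)
    (by simpa using hle)
  simpa using this

lemma succT_ty {Γ : Ctx} (hb : baseCtx Γ) :
    HasType Γ succT (.arr .box .N (.arr .bbox .N .N)) := by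
  apply HasType.lam
  apply HasType.lam
  have hv : HasType ((1, Aspect.bbox, Ty.N) :: (0, Aspect.box, Ty.N) :: Γ) (Term.var 1) Ty.N :=
    HasType.var (a := Aspect.bbox) (by simp)
  exact hasType_app (baseCtx_cons (baseCtx_cons hb)) HasType.s1 hv (ctxLe_bbox _)

lemma addT_ty {Γ : Ctx} (hb : baseCtx Γ) (hx : ctxLe Γ .box) :
    HasType Γ addT (.arr .box .N (.arr .box .N .N)) := by
  apply HasType.lam
  apply HasType.lam
  set Γ2 : Ctx := (0, Aspect.box, Ty.N) :: (3, Aspect.box, Ty.N) :: Γ with hΓ2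
  have hb2 : baseCtx Γ2 := baseCtx_cons (baseCtx_cons hb)
  have hx2 : ctxLe Γ2 .box := ctxLe_cons_box (ctxLe_cons_box hx)
  have hv0 : HasType Γ2 (Term.var 0) Ty.N := HasType.var (a := Aspect.box) (by simp [hΓ2])
  have hv3 : HasType Γ2 (Term.var 3) Ty.N := HasType.var (a := Aspect.box) (by simp [hΓ2])
  have := HasType.rec_ (Γ₁ := Γ2) (Γ₂ := []) (Δ₁ := []) (Δ₂ := []) (A := Ty.N)
    hb2 baseCtx_nil (by simpa using hv0) (by simpa using hv3)
    (by simpa using succT_ty hb2) (by simpa using hx2) (by trivial)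
  simpa using this

lemma stepV_ty {Γ : Ctx} (hb : baseCtx Γ) :
    HasType ((0, Aspect.box, Ty.N) :: (3, Aspect.box, Ty.N) :: Γ) stepV
      (.arr .box .N (.arr .bbox .N .N)) := by
  apply HasType.lam
  apply HasType.lam
  set Γm : Ctx := [(1, Aspect.bbox, Ty.N), (2, Aspect.box, Ty.N), (0, Aspect.box, Ty.N)] with hΓm
  have hbm : baseCtx Γm := by
    intro e he
    simp [hΓm] at he
    rcases he with rfl | rfl | rfl <;> rfl
  have hv3 : HasType ([] ++ [(3, Aspect.box, Ty.N)]) (Term.var 3) Ty.N :=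
    HasType.var (a := Aspect.box) (by simp)
  have hv1 : HasType ([] ++ Γm ++ Γ) (Term.var 1) Ty.N :=
    HasType.var (a := Aspect.bbox) (by simp [hΓm])
  have hle : ctxLe ([] ++ [(3, Aspect.box, Ty.N)]) .box := by
    intro e he
    simp at he
    subst he
    exact .refl _
  have := HasType.rec_ (Γ₁ := []) (Γ₂ := Γm)
    (Δ₁ := [(3, Aspect.box, Ty.N)]) (Δ₂ := Γ) (A := Ty.N)
    baseCtx_nil hbm hv3 hv1 (by simpa using succT_ty hbm) hle (by trivial)
  simpa [hΓm] using this

lemma mulT_ty {Γ : Ctx} (hb : baseCtx Γ) (hx : ctxLe Γ .box) :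
    HasType Γ mulT (.arr .box .N (.arr .box .N .N)) := by
  apply HasType.lam
  apply HasType.lam
  set Γ2 : Ctx := (0, Aspect.box, Ty.N) :: (3, Aspect.box, Ty.N) :: Γ with hΓ2
  have hb2 : baseCtx Γ2 := baseCtx_cons (baseCtx_cons hb)
  have hx2 : ctxLe Γ2 .box := ctxLe_cons_box (ctxLe_cons_box hx)
  have hv0 : HasType Γ2 (Term.var 0) Ty.N := HasType.var (a := Aspect.box) (by simp [hΓ2])
  have := HasType.rec_ (Γ₁ := Γ2) (Γ₂ := []) (Δ₁ := []) (Δ₂ := []) (A := Ty.N)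
    hb2 baseCtx_nil (by simpa using hv0) (by simpa using HasType.num (Γ := Γ2) (n := 0))
    (by simpa [hΓ2] using stepV_ty hb) (by simpa using hx2) (by trivial)
  simpa using this

end RSLRTerms


section RSLREval

lemma red_iter (i c : ℕ) :
    Red (.rec_ .N (.num (2 ^ i - 1)) (.num c) succT) (.num (2 ^ i * c + (2 ^ i - 1))) := by
  induction i with
  | zero =>
      simp only [pow_zero, Nat.sub_self, one_mul, Nat.add_zero]
      exact red_one Step.recZero
  | succ i ih =>
      have h0 : (1:ℕ) ≤ 2 ^ i := Nat.one_le_two_pow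
      have hp : (2:ℕ) ^ (i + 1) = 2 * 2 ^ i := by ring
      have hk : 2 ^ (i + 1) - 1 = (2 ^ (i + 1) - 2) + 1 := by omega
      set k : ℕ := 2 ^ (i + 1) - 2 with hkdef
      have hk2 : (k + 1) / 2 = 2 ^ i - 1 := by omega
      nth_rewrite 1 [hk]
      refine Relation.ReflTransGen.head (Step.recSucc) ?_
      -- reduce the applied step function
      refine Relation.ReflTransGen.head
        (b := .app (.lam 1 .bbox .N (.app .s1 (.var 1)))
          (.rec_ .N (.num ((k + 1) / 2)) (.num c) succT)) ?_ ?_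
      · have := Step.appL (s := .rec_ .N (.num ((k + 1) / 2)) (.num c) succT)
          (Step.betaN (x := 0) (a := .box) (t := .lam 1 .bbox .N (.app .s1 (.var 1)))
            (n := k + 1))
        simpa [DStep, succT, subst] using this
      · rw [hk2]
        refine Relation.ReflTransGen.trans (red_appR _ ih) ?_
        refine Relation.ReflTransGen.head
          (b := .app .s1 (.num (2 ^ i * c + (2 ^ i - 1)))) ?_ ?_
        · have := Step.betaN (x := 1) (a := .bbox) (t := .app .s1 (.var 1))
            (n := 2 ^ i * c + (2 ^ i - 1))
          simpa [DStep, subst] using this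
        · have := Step.succ1 (n := 2 ^ i * c + (2 ^ i - 1))
          have hm : 2 ^ (i + 1) * c = 2 * (2 ^ i * c) := by rw [hp]; ring
          have he : 2 * (2 ^ i * c + (2 ^ i - 1)) + 1 = 2 ^ (i + 1) * c + (2 ^ (i + 1) - 1) := by
            omega
          rw [← he]
          exact red_one this

lemma red_mulstep (j c a : ℕ) :
    Red (.rec_ .N (.num (2 ^ a - 1)) (.num (2 ^ c - 1)) (stepT (2 ^ j - 1)))
      (.num (2 ^ (c + a * j) - 1)) := by
  induction a with
  | zero =>
      simp only [pow_zero, Nat.sub_self, Nat.zero_mul, Nat.add_zero]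
      exact red_one Step.recZero
  | succ a ih =>
      have h0 : (1:ℕ) ≤ 2 ^ a := Nat.one_le_two_pow
      have hp : (2:ℕ) ^ (a + 1) = 2 * 2 ^ a := by ring
      have hk : 2 ^ (a + 1) - 1 = (2 ^ (a + 1) - 2) + 1 := by omega
      set k : ℕ := 2 ^ (a + 1) - 2 with hkdef
      have hk2 : (k + 1) / 2 = 2 ^ a - 1 := by omega
      nth_rewrite 1 [hk]
      refine Relation.ReflTransGen.head (Step.recSucc) ?_
      refine Relation.ReflTransGen.head
        (b := .app (.lam 1 .bbox .N (.rec_ .N (.num (2 ^ j - 1)) (.var 1) succT))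
          (.rec_ .N (.num ((k + 1) / 2)) (.num (2 ^ c - 1)) (stepT (2 ^ j - 1)))) ?_ ?_
      · have := Step.appL (s := .rec_ .N (.num ((k + 1) / 2)) (.num (2 ^ c - 1))
            (stepT (2 ^ j - 1)))
          (Step.betaN (x := 2) (a := .box)
            (t := .lam 1 .bbox .N (.rec_ .N (.num (2 ^ j - 1)) (.var 1) succT))
            (n := k + 1))
        simpa [DStep, stepT, subst, succT] using this
      · rw [hk2]
        refine Relation.ReflTransGen.trans (red_appR _ ih) ?_
        refine Relation.ReflTransGen.head
          (b := .rec_ .N (.num (2 ^ j - 1)) (.num (2 ^ (c + a * j) - 1)) succT) ?_ ?_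
        · have := Step.betaN (x := 1) (a := .bbox)
            (t := .rec_ .N (.num (2 ^ j - 1)) (.var 1) succT)
            (n := 2 ^ (c + a * j) - 1)
          simpa [DStep, subst, succT] using this
        · have := red_iter j (2 ^ (c + a * j) - 1)
          have h1 : (1:ℕ) ≤ 2 ^ (c + a * j) := Nat.one_le_two_pow
          have h2 : (1:ℕ) ≤ 2 ^ j := Nat.one_le_two_pow
          have hpw : (2:ℕ) ^ (c + (a + 1) * j) = 2 ^ j * 2 ^ (c + a * j) := by
            rw [show c + (a + 1) * j = j + (c + a * j) by ring, pow_add]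
          have hm : (2:ℕ) ^ j * (2 ^ (c + a * j) - 1) = 2 ^ j * 2 ^ (c + a * j) - 2 ^ j := by
            rw [Nat.mul_sub_one]
          have he : 2 ^ j * (2 ^ (c + a * j) - 1) + (2 ^ j - 1)
              = 2 ^ (c + (a + 1) * j) - 1 := by
            rw [hpw]
            have h3 : (2:ℕ) ^ j ≤ 2 ^ j * 2 ^ (c + a * j) := Nat.le_mul_of_pos_right _ (by positivity)
            omega
          rwa [he] at this

end RSLREval


section RSLRRep

/-- Representability of a function on unary numerals. -/
def RepU (f : ℕ → ℕ) : Prop :=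
  ∃ t : Term, Closed t ∧
    (∀ Γ : Ctx, baseCtx Γ → ctxLe Γ .box → HasType Γ t (.arr .box .N .N)) ∧
    ∀ i : ℕ, Red (.app t (.num (2 ^ i - 1))) (.num (2 ^ f i - 1))

lemma Rep_ext {f g : ℕ → ℕ} (h : ∀ i, f i = g i) (hf : RepU f) : RepU g := by
  obtain ⟨t, h1, h2, h3⟩ := hf
  exact ⟨t, h1, h2, fun i => by rw [← h i]; exact h3 i⟩

lemma Rep_const (c : ℕ) : RepU fun _ => c := by
  refine ⟨.lam 0 .box .N (.num (2 ^ c - 1)), rfl, ?_, ?_⟩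
  · intro Γ _ _
    exact HasType.lam HasType.num
  · intro i
    exact red_one (Step.betaN (x := 0) (a := .box) (t := .num (2 ^ c - 1)) (n := 2 ^ i - 1))

lemma Rep_id : RepU fun i => i := by
  refine ⟨.lam 0 .box .N (.var 0), rfl, ?_, ?_⟩
  · intro Γ _ _
    exact HasType.lam (HasType.var (a := .box) (by simp))
  · intro i
    exact red_one (Step.betaN (x := 0) (a := .box) (t := .var 0) (n := 2 ^ i - 1))

lemma Rep_add {f g : ℕ → ℕ} (hf : RepU f) (hg : RepU g) : RepU fun i => f i + g i := by
  obtain ⟨tf, cf, yf, rf⟩ := hf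
  obtain ⟨tg, cg, yg, rg⟩ := hg
  refine ⟨.lam 0 .box .N (.app (.app addT (.app tg (.var 0))) (.app tf (.var 0))), ?_, ?_, ?_⟩
  · unfold Closed at cf cg ⊢
    simp [fv, addT, succT, cf, cg]
  · intro Γ hb hx
    apply HasType.lam
    have hb2 : baseCtx ((0, Aspect.box, Ty.N) :: Γ) := baseCtx_cons hb
    have hx2 : ctxLe ((0, Aspect.box, Ty.N) :: Γ) .box := ctxLe_cons_box hx
    have hv : HasType ((0, Aspect.box, Ty.N) :: Γ) (Term.var 0) Ty.N :=
      HasType.var (a := .box) (by simp)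
    exact hasType_app hb2
      (hasType_app hb2 (addT_ty hb2 hx2) (hasType_app hb2 (yg _ hb2 hx2) hv hx2) hx2)
      (hasType_app hb2 (yf _ hb2 hx2) hv hx2) hx2
  · intro i
    refine Relation.ReflTransGen.head
      (b := .app (.app addT (.app tg (.num (2 ^ i - 1)))) (.app tf (.num (2 ^ i - 1)))) ?_ ?_
    · have := Step.betaN (x := 0) (a := .box)
        (t := .app (.app addT (.app tg (.var 0))) (.app tf (.var 0))) (n := 2 ^ i - 1)
      simpa [DStep, subst, subst_closed cf, subst_closed cg, addT, succT] using this
    · refine Relation.ReflTransGen.trans (red_appL _ (red_appR _ (rg i))) ?_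
      refine Relation.ReflTransGen.head
        (b := .app (.lam 0 .box .N (.rec_ .N (.var 0) (.num (2 ^ g i - 1)) succT))
          (.app tf (.num (2 ^ i - 1)))) ?_ ?_
      · have := Step.appL (s := .app tf (.num (2 ^ i - 1)))
          (Step.betaN (x := 3) (a := .box)
            (t := .lam 0 .box .N (.rec_ .N (.var 0) (.var 3) succT)) (n := 2 ^ g i - 1))
        simpa [DStep, addT, succT, subst] using this
      · refine Relation.ReflTransGen.trans (red_appR _ (rf i)) ?_
        refine Relation.ReflTransGen.head
          (b := .rec_ .N (.num (2 ^ f i - 1)) (.num (2 ^ g i - 1)) succT) ?_ ?_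
        · have := Step.betaN (x := 0) (a := .box)
            (t := .rec_ .N (.var 0) (.num (2 ^ g i - 1)) succT) (n := 2 ^ f i - 1)
          simpa [DStep, succT, subst] using this
        · have := red_iter (f i) (2 ^ g i - 1)
          have h1 : (1:ℕ) ≤ 2 ^ g i := Nat.one_le_two_pow
          have h2 : (1:ℕ) ≤ 2 ^ f i := Nat.one_le_two_pow
          have hm : (2:ℕ) ^ f i * (2 ^ g i - 1) = 2 ^ f i * 2 ^ g i - 2 ^ f i :=
            Nat.mul_sub_one _ _
          have hpw : (2:ℕ) ^ (f i + g i) = 2 ^ f i * 2 ^ g i := pow_add 2 _ _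
          have h3 : (2:ℕ) ^ f i ≤ 2 ^ f i * 2 ^ g i :=
            Nat.le_mul_of_pos_right _ (by positivity)
          have he : 2 ^ f i * (2 ^ g i - 1) + (2 ^ f i - 1) = 2 ^ (f i + g i) - 1 := by
            omega
          rwa [he] at this

lemma Rep_mul {f g : ℕ → ℕ} (hf : RepU f) (hg : RepU g) : RepU fun i => f i * g i := by
  obtain ⟨tf, cf, yf, rf⟩ := hf
  obtain ⟨tg, cg, yg, rg⟩ := hg
  refine ⟨.lam 0 .box .N (.app (.app mulT (.app tg (.var 0))) (.app tf (.var 0))), ?_, ?_, ?_⟩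
  · unfold Closed at cf cg ⊢
    simp [fv, mulT, stepV, succT, cf, cg]
  · intro Γ hb hx
    apply HasType.lam
    have hb2 : baseCtx ((0, Aspect.box, Ty.N) :: Γ) := baseCtx_cons hb
    have hx2 : ctxLe ((0, Aspect.box, Ty.N) :: Γ) .box := ctxLe_cons_box hx
    have hv : HasType ((0, Aspect.box, Ty.N) :: Γ) (Term.var 0) Ty.N :=
      HasType.var (a := .box) (by simp)
    exact hasType_app hb2
      (hasType_app hb2 (mulT_ty hb2 hx2) (hasType_app hb2 (yg _ hb2 hx2) hv hx2) hx2)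
      (hasType_app hb2 (yf _ hb2 hx2) hv hx2) hx2
  · intro i
    refine Relation.ReflTransGen.head
      (b := .app (.app mulT (.app tg (.num (2 ^ i - 1)))) (.app tf (.num (2 ^ i - 1)))) ?_ ?_
    · have := Step.betaN (x := 0) (a := .box)
        (t := .app (.app mulT (.app tg (.var 0))) (.app tf (.var 0))) (n := 2 ^ i - 1)
      simpa [DStep, subst, subst_closed cf, subst_closed cg, mulT, stepV, succT] using this
    · refine Relation.ReflTransGen.trans (red_appL _ (red_appR _ (rg i))) ?_
      refine Relation.ReflTransGen.head
        (b := .app (.lam 0 .box .N (.rec_ .N (.var 0) (.num 0) (stepT (2 ^ g i - 1))))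
          (.app tf (.num (2 ^ i - 1)))) ?_ ?_
      · have := Step.appL (s := .app tf (.num (2 ^ i - 1)))
          (Step.betaN (x := 3) (a := .box)
            (t := .lam 0 .box .N (.rec_ .N (.var 0) (.num 0) stepV)) (n := 2 ^ g i - 1))
        simpa [DStep, mulT, stepV, stepT, succT, subst] using this
      · refine Relation.ReflTransGen.trans (red_appR _ (rf i)) ?_
        refine Relation.ReflTransGen.head
          (b := .rec_ .N (.num (2 ^ f i - 1)) (.num 0) (stepT (2 ^ g i - 1))) ?_ ?_
        · have := Step.betaN (x := 0) (a := .box)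
            (t := .rec_ .N (.var 0) (.num 0) (stepT (2 ^ g i - 1))) (n := 2 ^ f i - 1)
          simpa [DStep, stepT, succT, subst] using this
        · have := red_mulstep (g i) 0 (f i)
          simpa using this

lemma RepUpoly (p : Polynomial ℕ) : RepU fun i => p.eval i := by
  induction p using Polynomial.induction_on with
  | C a => exact Rep_ext (fun i => by simp) (Rep_const a)
  | add p q hp hq => exact Rep_ext (fun i => by simp) (Rep_add hp hq)
  | monomial n a h =>
      refine Rep_ext (fun i => ?_) (Rep_mul h Rep_id)
      simp [pow_succ]
      ring

end RSLRRep

/-- every polynomial with natural coefficients is representable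
in RSLR by a term of type □U → U on unary-encoded naturals: applying it to
the unary encoding of i evaluates with probability 1 (Dirac distribution) to
the unary encoding of p(i). -/
theorem polynomial_representable (p : Polynomial ℕ) :
    ∃ t : Term, HasType [] t (Ty.arr Aspect.box Ty.N Ty.N) ∧
      ∀ i : ℕ, MStep (Term.app t (unary i)) (dirac (unary (p.eval i))) := by
  obtain ⟨t, _, ht, hr⟩ := RepUpoly p
  refine ⟨t, ht [] baseCtx_nil (fun e he => absurd he List.not_mem_nil), fun i => ?_⟩
  exact mstep_of_red (hr i) (nf_num _)
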